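/- Let T > 0 and let (u,v) : ℝ × [0,T] → ℂ² be a continuously differentiable solution of the nonlinear Dirac system with M⁰ := 1 + sup_{ℝ×[0,T]}|u| + sup_{ℝ×[0,T]}|v| < ∞ and M¹ := sup_{ℝ×[0,T]}(|∂_t u| + |∂_x u| + |∂_t v| + |∂_x v|) < ∞. For h > 0 set u^k_n = u(nh,kh), v^k_n = v(nh,kh), and define the local truncation errors g^{k,1}_n = ∫₀¹ [i m v + i(α u|v|² + β G(u,v) v)]((n+τ)h,(k+τ)h) dτ − (i m/2)(v^{k+1}_{n−1} + v^k_n) − (i α/2)(u^{k+1}_{n+1} + u^k_n)|v^k_n|² − (i β/2)(v^{k+1}_{n−1} + v^k_n)·G(u^k_n, v^k_n) and g^{k,2}_n = ∫₀¹ [i m u + i(α v|u|² + β G(u,v) u)]((n−τ)h,(k+τ)h) dτ − (i m/2)(u^{k+1}_{n+1} + u^k_n) − (i α/2)(v^{k+1}_{n−1} + v^k_n)|u^k_n|² − (i β/2)(u^{k+1}_{n+1} + u^k_n)·G(u^k_n, v^k_n). Then for all h > 0, all l ∈ {1,2}, all n ∈ ℤ and all k ∈ ℕ with (k+1)h ≤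 T: |g^{k,l}_n| ≤ 6(m + |α| + |β|)·M¹·(M⁰)²·h. -/

import Mathlib

open Complex MeasureTheory Filter
open scoped ENNReal

noncomputable section

/-- `G(u,v) = conj(u)·v + u·conj(v)`. -/
def Gc (u v : ℂ) : ℂ := (starRingEnd ℂ) u * v + u * (starRingEnd ℂ) v

/-- One step of the quantum lattice Boltzmann (QLB) scheme:
`a, b` are the values `u^k_n, v^k_n` and `a', b'` the values `u^{k+1}_{n+1}, v^{k+1}_{n-1}`. -/
def QLBStep (h m α β : ℝ) (a b a' b' : ℂ) : Prop :=
  a' - a = (Complex.I * (m : ℂ) * (h : ℂ) / 2) * (b' + b)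
      + (Complex.I * (α : ℂ) * (h : ℂ) / 2) * (a' + a) * ((‖b‖ ^ 2 : ℝ) : ℂ)
      + (Complex.I * (β : ℂ) * (h : ℂ) / 2) * (b' + b) * Gc a b
  ∧ b' - b = (Complex.I * (m : ℂ) * (h : ℂ) / 2) * (a' + a)
      + (Complex.I * (α : ℂ) * (h : ℂ) / 2) * (b' + b) * ((‖a‖ ^ 2 : ℝ) : ℂ)
      + (Complex.I * (β : ℂ) * (h : ℂ) / 2) * (a' + a) * Gc a b

/-- `(u, v)` is a solution of the QLB scheme. -/
def IsQLB (h m α β : ℝ) (u v : ℕ → ℤ → ℂ) : Prop :=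
  ∀ (k : ℕ) (n : ℤ), QLBStep h m α β (u k n) (v k n) (u (k + 1) (n + 1)) (v (k + 1) (n - 1))

/-- The piecewise-constant interpolant: `interp h w x t = w^k_n` for
`x ∈ [nh, (n+1)h)` and `t ∈ [kh, (k+1)h)` (for `t ≥ 0`). -/
def interp (h : ℝ) (w : ℕ → ℤ → ℂ) (x t : ℝ) : ℂ := w ⌊t / h⌋₊ ⌊x / h⌋

/-- Nonlinearity in the `u`-equation: `i(α u|v|² + β G(u,v) v)`. -/
def NLu (α β : ℝ) (a b : ℂ) : ℂ :=
  Complex.I * ((α : ℂ) * a * ((‖b‖ ^ 2 : ℝ) : ℂ) + (β : ℂ) * Gc a b * b)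

/-- Nonlinearity in the `v`-equation: `i(α v|u|² + β G(u,v) u)`. -/
def NLv (α β : ℝ) (a b : ℂ) : ℂ :=
  Complex.I * ((α : ℂ) * b * ((‖a‖ ^ 2 : ℝ) : ℂ) + (β : ℂ) * Gc a b * a)

namespace Stmt18Aux



lemma absle {a c : ℝ} (h1 : -c ≤ a) (h2 : a ≤ c) : |a| ≤ c := abs_le.mpr ⟨h1, h2⟩

lemma Gc_comm (a b : ℂ) : Gc a b = Gc b a := by unfold Gc; ring

lemma NLv_eq (α β : ℝ) (a b : ℂ) : NLv α β a b = NLu α β b a := by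
  unfold NLu NLv; rw [Gc_comm]

lemma abs_Gc_le (a b : ℂ) : ‖Gc a b‖ ≤ 2 * ‖a‖ * ‖b‖ := by
  unfold Gc
  refine le_trans (norm_add_le _ _) (le_of_eq ?_)
  simp only [norm_mul, Complex.norm_conj]
  ring

lemma abs_Gc_sub_le (a b a' b' : ℂ) :
    ‖Gc a b - Gc a' b'‖ ≤
      ‖a - a'‖ * (‖b‖ + ‖b'‖)
      + (‖a‖ + ‖a'‖) * ‖b - b'‖ := by
  have hw : Gc a b - Gc a' b'
      = ((starRingEnd ℂ) (a - a') * (b + b') + (starRingEnd ℂ) (a + a') * (b - b')) / 2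
      + ((a - a') * (starRingEnd ℂ) (b + b') + (a + a') * (starRingEnd ℂ) (b - b')) / 2 := by
    unfold Gc; simp only [map_sub, map_add]; ring
  rw [hw]
  refine le_trans (norm_add_le _ _) ?_
  rw [norm_div, norm_div, Complex.norm_two]
  have h1 := norm_add_le ((starRingEnd ℂ) (a - a') * (b + b'))
    ((starRingEnd ℂ) (a + a') * (b - b'))
  have h2 := norm_add_le ((a - a') * (starRingEnd ℂ) (b + b'))
    ((a + a') * (starRingEnd ℂ) (b - b'))
  simp only [norm_mul, Complex.norm_conj] at h1 h2
  have h3 := norm_add_le b b'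
  have h4 := norm_add_le a a'
  have h5 := mul_le_mul_of_nonneg_left h3 (norm_nonneg (a - a'))
  have h6 := mul_le_mul_of_nonneg_right h4 (norm_nonneg (b - b'))
  have h7 := mul_le_mul_of_nonneg_left h3 (norm_nonneg (a - a'))
  nlinarith [norm_nonneg (a - a'), norm_nonneg (b - b'),
    norm_nonneg (a + a'), norm_nonneg (b + b'), h1, h2]

lemma incr_bound (f ft fx : ℝ → ℝ → ℂ)
    (h1 : ∀ x t : ℝ, HasDerivAt (fun s => f x s) (ft x t) t)
    (h2 : ∀ x t : ℝ, HasDerivAt (fun y => f y t) (fx x t) x)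
    {C : ℝ} {x₀ x₁ t₀ t₁ : ℝ}
    (hbx : ∀ y ∈ Set.uIcc x₀ x₁, ‖fx y t₁‖ ≤ C)
    (hbt : ∀ s ∈ Set.uIcc t₀ t₁, ‖ft x₀ s‖ ≤ C) :
    ‖f x₁ t₁ - f x₀ t₀‖ ≤ C * (|x₁ - x₀| + |t₁ - t₀|) := by
  have hx : ‖f x₁ t₁ - f x₀ t₁‖ ≤ C * ‖x₁ - x₀‖ :=
    (convex_uIcc x₀ x₁).norm_image_sub_le_of_norm_hasDerivWithin_le
      (fun y _ => (h2 y t₁).hasDerivWithinAt)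
      (fun y hy => by simpa using hbx y hy)
      Set.left_mem_uIcc Set.right_mem_uIcc
  have ht : ‖f x₀ t₁ - f x₀ t₀‖ ≤ C * ‖t₁ - t₀‖ :=
    (convex_uIcc t₀ t₁).norm_image_sub_le_of_norm_hasDerivWithin_le
      (fun s _ => (h1 x₀ s).hasDerivWithinAt)
      (fun s hs => by simpa using hbt s hs)
      Set.left_mem_uIcc Set.right_mem_uIcc
  calc ‖f x₁ t₁ - f x₀ t₀‖
      = ‖(f x₁ t₁ - f x₀ t₁) + (f x₀ t₁ - f x₀ t₀)‖ := by
        congr 1; ring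
    _ ≤ ‖f x₁ t₁ - f x₀ t₁‖ + ‖f x₀ t₁ - f x₀ t₀‖ := norm_add_le _ _
    _ ≤ C * |x₁ - x₀| + C * |t₁ - t₀| := by
        have := add_le_add hx ht
        simpa [Real.norm_eq_abs] using this
    _ = C * (|x₁ - x₀| + |t₁ - t₀|) := by ring

lemma cont_of_partials (f ft fx : ℝ → ℝ → ℂ)
    (hct : Continuous fun p : ℝ × ℝ => ft p.1 p.2)
    (hcx : Continuous fun p : ℝ × ℝ => fx p.1 p.2)
    (h1 : ∀ x t : ℝ, HasDerivAt (fun s => f x s) (ft x t) t)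
    (h2 : ∀ x t : ℝ, HasDerivAt (fun y => f y t) (fx x t) x) :
    Continuous fun p : ℝ × ℝ => f p.1 p.2 := by
  rw [continuous_iff_continuousAt]
  rintro ⟨x₀, t₀⟩
  have hKc : IsCompact ((Set.Icc (x₀ - 1) (x₀ + 1)) ×ˢ (Set.Icc (t₀ - 1) (t₀ + 1))) :=
    isCompact_Icc.prod isCompact_Icc
  obtain ⟨C1, hC1⟩ := hKc.exists_bound_of_continuousOn hcx.continuousOn
  obtain ⟨C2, hC2⟩ := hKc.exists_bound_of_continuousOn hct.continuousOn
  apply continuousAt_of_locally_lipschitz one_pos (2 * max C1 C2)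
  rintro ⟨x, t⟩ hp
  have hdx : |x - x₀| ≤ dist (x, t) (x₀, t₀) := by
    rw [Prod.dist_eq]
    exact le_trans (le_of_eq (Real.dist_eq x x₀).symm) (le_max_left _ _)
  have hdt : |t - t₀| ≤ dist (x, t) (x₀, t₀) := by
    rw [Prod.dist_eq]
    exact le_trans (le_of_eq (Real.dist_eq t t₀).symm) (le_max_right _ _)
  have hx1 : |x - x₀| ≤ 1 := le_trans hdx hp.le
  have ht1 : |t - t₀| ≤ 1 := le_trans hdt hp.le
  have hxm : x ∈ Set.Icc (x₀ - 1) (x₀ + 1) := by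
    rw [abs_le] at hx1; constructor <;> linarith [hx1.1, hx1.2]
  have htm : t ∈ Set.Icc (t₀ - 1) (t₀ + 1) := by
    rw [abs_le] at ht1; constructor <;> linarith [ht1.1, ht1.2]
  have hx0m : x₀ ∈ Set.Icc (x₀ - 1) (x₀ + 1) := by constructor <;> linarith
  have ht0m : t₀ ∈ Set.Icc (t₀ - 1) (t₀ + 1) := by constructor <;> linarith
  have key : ‖f x t - f x₀ t₀‖ ≤ max C1 C2 * (|x - x₀| + |t - t₀|) := by
    apply incr_bound f ft fx h1 h2
    · intro y hy
      have hym : y ∈ Set.Icc (x₀ - 1) (x₀ + 1) :=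
        (Set.ordConnected_Icc.uIcc_subset hx0m hxm) hy
      have := hC1 (y, t) (Set.mk_mem_prod hym htm)
      exact le_trans this (le_max_left _ _)
    · intro s hs
      have hsm : s ∈ Set.Icc (t₀ - 1) (t₀ + 1) :=
        (Set.ordConnected_Icc.uIcc_subset ht0m htm) hs
      have := hC2 (x₀, s) (Set.mk_mem_prod hx0m hsm)
      exact le_trans this (le_max_right _ _)
  have hC0 : 0 ≤ max C1 C2 := by
    have := hC1 (x₀, t₀) (Set.mk_mem_prod hx0m ht0m)
    exact le_trans (norm_nonneg _) (le_trans this (le_max_left _ _))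
  calc dist (f x t) (f x₀ t₀) = ‖f x t - f x₀ t₀‖ := by
        rw [Complex.dist_eq]
    _ ≤ max C1 C2 * (|x - x₀| + |t - t₀|) := key
    _ ≤ max C1 C2 * (dist (x, t) (x₀, t₀) + dist (x, t) (x₀, t₀)) :=
        mul_le_mul_of_nonneg_left (add_le_add hdx hdt) hC0
    _ = 2 * max C1 C2 * dist (x, t) (x₀, t₀) := by ring


set_option maxHeartbeats 1000000 in
lemma core (m α β M0 D : ℝ) (hm : 0 ≤ m) (hD : 0 ≤ D) (hM : 1 ≤ M0)
    (uP vP uA vA uB vC : ℂ)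
    (hP : ‖uP‖ + ‖vP‖ ≤ M0 - 1)
    (hA : ‖uA‖ + ‖vA‖ ≤ M0 - 1)
    (hB : ‖uB‖ ≤ M0 - 1)
    (hC : ‖vC‖ ≤ M0 - 1)
    (d1 : ‖uP - uA‖ ≤ 2 * D)
    (d2 : ‖uP - uB‖ ≤ 2 * D)
    (d3 : ‖vP - vA‖ ≤ 2 * D)
    (d4 : ‖vP - vC‖ ≤ 2 * D) :
    ‖(Complex.I * (m : ℂ) * vP + NLu α β uP vP
      - ((Complex.I * (m : ℂ) / 2) * (vC + vA)
        + (Complex.I * (α : ℂ) / 2) * (uB + uA) * ((‖vA‖ ^ 2 : ℝ) : ℂ)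
        + (Complex.I * (β : ℂ) / 2) * (vC + vA) * Gc uA vA))‖
      ≤ 6 * (m + |α| + |β|) * M0 ^ 2 * D := by
  have nuP := norm_nonneg uP
  have nvP := norm_nonneg vP
  have nuA := norm_nonneg uA
  have nvA := norm_nonneg vA
  have nuB := norm_nonneg uB
  have nvC := norm_nonneg vC
  have hkey : Complex.I * (m : ℂ) * vP + NLu α β uP vP
      - ((Complex.I * (m : ℂ) / 2) * (vC + vA)
        + (Complex.I * (α : ℂ) / 2) * (uB + uA) * ((‖vA‖ ^ 2 : ℝ) : ℂ)
        + (Complex.I * (β : ℂ) / 2) * (vC + vA) * Gc uA vA)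
      = Complex.I * ((m : ℂ) * (vP - (vC + vA) / 2))
      + Complex.I * ((α : ℂ) * (uP * ((‖vP‖ ^ 2 : ℝ) : ℂ)
          - (uB + uA) / 2 * ((‖vA‖ ^ 2 : ℝ) : ℂ)))
      + Complex.I * ((β : ℂ) * (Gc uP vP * vP - (vC + vA) / 2 * Gc uA vA)) := by
    simp only [NLu]; ring
  rw [hkey]
  have hIm : ‖(Complex.I * ((m : ℂ) * (vP - (vC + vA) / 2)))‖
      = m * ‖vP - (vC + vA) / 2‖ := by
    rw [norm_mul, norm_mul, Complex.norm_I, Complex.norm_real, Real.norm_eq_abs, _root_.abs_of_nonneg hm, one_mul]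
  have hIa : ‖(Complex.I * ((α : ℂ) * (uP * ((‖vP‖ ^ 2 : ℝ) : ℂ)
          - (uB + uA) / 2 * ((‖vA‖ ^ 2 : ℝ) : ℂ))))‖
      = |α| * ‖(uP * ((‖vP‖ ^ 2 : ℝ) : ℂ)
          - (uB + uA) / 2 * ((‖vA‖ ^ 2 : ℝ) : ℂ))‖ := by
    rw [norm_mul, norm_mul, Complex.norm_I, Complex.norm_real, Real.norm_eq_abs, one_mul]
  have hIb : ‖(Complex.I * ((β : ℂ) * (Gc uP vP * vP - (vC + vA) / 2 * Gc uA vA)))‖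
      = |β| * ‖Gc uP vP * vP - (vC + vA) / 2 * Gc uA vA‖ := by
    rw [norm_mul, norm_mul, Complex.norm_I, Complex.norm_real, Real.norm_eq_abs, one_mul]
  refine le_trans (norm_add_le _ _) ?_
  refine le_trans (add_le_add_left (norm_add_le _ _) _) ?_
  rw [hIm, hIa, hIb]
  -- averaged differences
  have T1 : ‖vP - (vC + vA) / 2‖ ≤ 2 * D := by
    have hident : vP - (vC + vA) / 2 = ((vP - vC) + (vP - vA)) / 2 := by ring
    rw [hident, norm_div, Complex.norm_two]
    have := norm_add_le (vP - vC) (vP - vA)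
    linarith
  have hu2 : ‖uP - (uB + uA) / 2‖ ≤ 2 * D := by
    have hident : uP - (uB + uA) / 2 = ((uP - uB) + (uP - uA)) / 2 := by ring
    rw [hident, norm_div, Complex.norm_two]
    have := norm_add_le (uP - uB) (uP - uA)
    linarith
  have hW : ‖(uB + uA) / 2‖ ≤ M0 - 1 := by
    rw [norm_div, Complex.norm_two]
    have := norm_add_le uB uA
    linarith
  have hW2 : ‖(vC + vA) / 2‖ ≤ M0 - 1 := by
    rw [norm_div, Complex.norm_two]
    have := norm_add_le vC vA
    linarith
  have hsq : ‖((‖vP‖ ^ 2 : ℝ) : ℂ) - ((‖vA‖ ^ 2 : ℝ) : ℂ)‖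
      ≤ 4 * (M0 - 1) * D := by
    rw [← Complex.ofReal_sub, Complex.norm_real, Real.norm_eq_abs]
    have h1 : |‖vP‖ - ‖vA‖| ≤ 2 * D :=
      le_trans (abs_norm_sub_norm_le _ _) d3
    have h2 : |‖vP‖ ^ 2 - ‖vA‖ ^ 2|
        = (‖vP‖ + ‖vA‖) * |‖vP‖ - ‖vA‖| := by
      rw [← _root_.abs_of_nonneg (by linarith : (0:ℝ) ≤ ‖vP‖ + ‖vA‖),
        ← abs_mul]
      congr 1; ring
    rw [h2]
    have h3 : (‖vP‖ + ‖vA‖) * |‖vP‖ - ‖vA‖|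
        ≤ (2 * (M0 - 1)) * (2 * D) :=
      mul_le_mul (by linarith) h1 (abs_nonneg _) (by linarith)
    linarith
  have T2 : ‖(uP * ((‖vP‖ ^ 2 : ℝ) : ℂ)
      - (uB + uA) / 2 * ((‖vA‖ ^ 2 : ℝ) : ℂ))‖ ≤ 6 * (M0 - 1) ^ 2 * D := by
    have hident : uP * ((‖vP‖ ^ 2 : ℝ) : ℂ)
        - (uB + uA) / 2 * ((‖vA‖ ^ 2 : ℝ) : ℂ)
        = (uP - (uB + uA) / 2) * ((‖vP‖ ^ 2 : ℝ) : ℂ)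
        + (uB + uA) / 2 * (((‖vP‖ ^ 2 : ℝ) : ℂ) - ((‖vA‖ ^ 2 : ℝ) : ℂ)) := by
      ring
    rw [hident]
    refine le_trans (norm_add_le _ _) ?_
    rw [norm_mul, norm_mul]
    have e1 : ‖((‖vP‖ ^ 2 : ℝ) : ℂ)‖ = ‖vP‖ ^ 2 := by
      rw [Complex.norm_real, Real.norm_eq_abs]
      exact _root_.abs_of_nonneg (sq_nonneg _)
    rw [e1]
    have b1 : ‖uP - (uB + uA) / 2‖ * ‖vP‖ ^ 2
        ≤ (2 * D) * (M0 - 1) ^ 2 :=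
      mul_le_mul hu2
        (by
          have hvP1 : ‖vP‖ ≤ M0 - 1 := by linarith
          have := mul_le_mul hvP1 hvP1 nvP (by linarith)
          linarith [this])
        (sq_nonneg _) (by linarith)
    have b2 : ‖(uB + uA) / 2‖
        * ‖((‖vP‖ ^ 2 : ℝ) : ℂ) - ((‖vA‖ ^ 2 : ℝ) : ℂ)‖
        ≤ (M0 - 1) * (4 * (M0 - 1) * D) :=
      mul_le_mul hW hsq (norm_nonneg _) (by linarith)
    linarith [b1, b2]
  have hGb : ‖Gc uP vP‖ ≤ (M0 - 1) ^ 2 / 2 := by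
    refine le_trans (abs_Gc_le uP vP) ?_
    have hq := mul_le_mul hP hP (by linarith) (by linarith)
    linarith [hq, sq_nonneg (‖uP‖ - ‖vP‖)]
  have hGd : ‖Gc uP vP - Gc uA vA‖ ≤ 4 * (M0 - 1) * D := by
    refine le_trans (abs_Gc_sub_le uP vP uA vA) ?_
    have e1 : ‖uP - uA‖ * (‖vP‖ + ‖vA‖)
        ≤ 2 * D * (‖vP‖ + ‖vA‖) :=
      mul_le_mul_of_nonneg_right d1 (by linarith)
    have e2 : (‖uP‖ + ‖uA‖) * ‖vP - vA‖
        ≤ (‖uP‖ + ‖uA‖) * (2 * D) :=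
      mul_le_mul_of_nonneg_left d3 (by linarith)
    have e3 : (2 * D) * ((‖vP‖ + ‖vA‖) + (‖uP‖ + ‖uA‖))
        ≤ (2 * D) * (2 * (M0 - 1)) :=
      mul_le_mul_of_nonneg_left (by linarith) (by linarith)
    linarith [e1, e2, e3]
  have T3 : ‖Gc uP vP * vP - (vC + vA) / 2 * Gc uA vA‖
      ≤ 5 * (M0 - 1) ^ 2 * D := by
    have hident : Gc uP vP * vP - (vC + vA) / 2 * Gc uA vA
        = Gc uP vP * (vP - (vC + vA) / 2) + (vC + vA) / 2 * (Gc uP vP - Gc uA vA) := by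
      ring
    rw [hident]
    refine le_trans (norm_add_le _ _) ?_
    rw [norm_mul, norm_mul]
    have b1 : ‖Gc uP vP‖ * ‖vP - (vC + vA) / 2‖
        ≤ ((M0 - 1) ^ 2 / 2) * (2 * D) :=
      mul_le_mul hGb T1 (norm_nonneg _) (by positivity)
    have b2 : ‖(vC + vA) / 2‖ * ‖Gc uP vP - Gc uA vA‖
        ≤ (M0 - 1) * (4 * (M0 - 1) * D) :=
      mul_le_mul hW2 hGd (norm_nonneg _) (by linarith)
    linarith [b1, b2]
  have hsq' : (M0 - 1) ^ 2 ≤ M0 ^ 2 := by linarith [hM]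
  have hM2 : 1 ≤ M0 ^ 2 := by linarith [sq_nonneg (M0 - 1), hM]
  have f1 : m * ‖vP - (vC + vA) / 2‖ ≤ m * (2 * D) :=
    mul_le_mul_of_nonneg_left T1 hm
  have f2 : |α| * ‖(uP * ((‖vP‖ ^ 2 : ℝ) : ℂ)
      - (uB + uA) / 2 * ((‖vA‖ ^ 2 : ℝ) : ℂ))‖ ≤ |α| * (6 * (M0 - 1) ^ 2 * D) :=
    mul_le_mul_of_nonneg_left T2 (abs_nonneg α)
  have f3 : |β| * ‖Gc uP vP * vP - (vC + vA) / 2 * Gc uA vA‖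
      ≤ |β| * (5 * (M0 - 1) ^ 2 * D) :=
    mul_le_mul_of_nonneg_left T3 (abs_nonneg β)
  have g1 : m * (2 * D) ≤ m * (6 * M0 ^ 2 * D) := by
    refine mul_le_mul_of_nonneg_left ?_ hm
    linarith [mul_nonneg hD (by linarith [hM2] : (0:ℝ) ≤ 6 * M0 ^ 2 - 2)]
  have g2 : |α| * (6 * (M0 - 1) ^ 2 * D) ≤ |α| * (6 * M0 ^ 2 * D) := by
    refine mul_le_mul_of_nonneg_left ?_ (abs_nonneg α)
    linarith [mul_nonneg hD (sub_nonneg.mpr hsq')]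
  have g3 : |β| * (5 * (M0 - 1) ^ 2 * D) ≤ |β| * (6 * M0 ^ 2 * D) := by
    refine mul_le_mul_of_nonneg_left ?_ (abs_nonneg β)
    linarith [mul_nonneg hD (sub_nonneg.mpr hsq'), mul_nonneg hD (sq_nonneg M0)]
  linarith [f1, f2, f3, g1, g2, g3]


lemma final_bound (F : ℝ → ℂ) (A1 A2 A3 : ℂ) (K : ℝ)
    (hFc : Continuous F)
    (hb : ∀ τ ∈ Set.uIoc (0:ℝ) 1, ‖F τ - (A1 + A2 + A3)‖ ≤ K) :
    ‖(∫ τ in (0:ℝ)..1, F τ) - A1 - A2 - A3‖ ≤ K := by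
  have hFi : IntervalIntegrable F volume 0 1 := hFc.intervalIntegrable 0 1
  have heq : (∫ τ in (0:ℝ)..1, F τ) - A1 - A2 - A3
      = ∫ τ in (0:ℝ)..1, (F τ - (A1 + A2 + A3)) := by
    rw [intervalIntegral.integral_sub hFi intervalIntegrable_const,
      intervalIntegral.integral_const]
    norm_num
    ring
  rw [heq]
  have hb' : ∀ x ∈ Set.uIoc (0:ℝ) 1, ‖F x - (A1 + A2 + A3)‖ ≤ K := fun x hx => by
    exact hb x hx
  calc ‖∫ τ in (0:ℝ)..1, (F τ - (A1 + A2 + A3))‖ ≤ K * |1 - 0|:=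
        intervalIntegral.norm_integral_le_of_norm_le_const hb'
    _ = K := by norm_num



end Stmt18Aux

set_option maxHeartbeats 2000000 in
/-- Bound on the local truncation errors of the QLB scheme evaluated on a
continuously differentiable solution of the nonlinear Dirac system. -/
theorem stmt18 (m α β T : ℝ) (hm : 0 ≤ m) (hT : 0 < T)
    (u v ut ux vt vx : ℝ → ℝ → ℂ)
    (hcut : Continuous fun p : ℝ × ℝ => ut p.1 p.2)
    (hcux : Continuous fun p : ℝ × ℝ => ux p.1 p.2)
    (hcvt : Continuous fun p : ℝ × ℝ => vt p.1 p.2)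
    (hcvx : Continuous fun p : ℝ × ℝ => vx p.1 p.2)
    (hut : ∀ x t : ℝ, HasDerivAt (fun s => u x s) (ut x t) t)
    (hux : ∀ x t : ℝ, HasDerivAt (fun y => u y t) (ux x t) x)
    (hvt : ∀ x t : ℝ, HasDerivAt (fun s => v x s) (vt x t) t)
    (hvx : ∀ x t : ℝ, HasDerivAt (fun y => v y t) (vx x t) x)
    (hpde1 : ∀ x t : ℝ,
      ut x t + ux x t = Complex.I * (m : ℂ) * v x t + NLu α β (u x t) (v x t))
    (hpde2 : ∀ x t : ℝ,
      vt x t - vx x t = Complex.I * (m : ℂ) * u x t + NLv α β (u x t) (v x t))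
    (M0 M1 : ℝ)
    (hM0 : ∀ x t : ℝ, t ∈ Set.Icc (0 : ℝ) T →
      1 + ‖u x t‖ + ‖v x t‖ ≤ M0)
    (hM1 : ∀ x t : ℝ, t ∈ Set.Icc (0 : ℝ) T →
      ‖ut x t‖ + ‖ux x t‖
        + ‖vt x t‖ + ‖vx x t‖ ≤ M1)
    (h : ℝ) (hh : 0 < h) (k : ℕ) (n : ℤ) (hkT : ((k : ℝ) + 1) * h ≤ T) :
    let g1 : ℂ := (∫ τ in (0 : ℝ)..1,
        (Complex.I * (m : ℂ) * v (((n : ℝ) + τ) * h) (((k : ℝ) + τ) * h)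
          + NLu α β (u (((n : ℝ) + τ) * h) (((k : ℝ) + τ) * h))
              (v (((n : ℝ) + τ) * h) (((k : ℝ) + τ) * h))))
      - (Complex.I * (m : ℂ) / 2) *
          (v (((n : ℝ) - 1) * h) (((k : ℝ) + 1) * h) + v ((n : ℝ) * h) ((k : ℝ) * h))
      - (Complex.I * (α : ℂ) / 2) *
          (u (((n : ℝ) + 1) * h) (((k : ℝ) + 1) * h) + u ((n : ℝ) * h) ((k : ℝ) * h)) *
          ((‖(v ((n : ℝ) * h) ((k : ℝ) * h))‖ ^ 2 : ℝ) : ℂ)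
      - (Complex.I * (β : ℂ) / 2) *
          (v (((n : ℝ) - 1) * h) (((k : ℝ) + 1) * h) + v ((n : ℝ) * h) ((k : ℝ) * h)) *
          Gc (u ((n : ℝ) * h) ((k : ℝ) * h)) (v ((n : ℝ) * h) ((k : ℝ) * h))
    let g2 : ℂ := (∫ τ in (0 : ℝ)..1,
        (Complex.I * (m : ℂ) * u (((n : ℝ) - τ) * h) (((k : ℝ) + τ) * h)
          + NLv α β (u (((n : ℝ) - τ) * h) (((k : ℝ) + τ) * h))
              (v (((n : ℝ) - τ) * h) (((k : ℝ) + τ) * h))))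
      - (Complex.I * (m : ℂ) / 2) *
          (u (((n : ℝ) + 1) * h) (((k : ℝ) + 1) * h) + u ((n : ℝ) * h) ((k : ℝ) * h))
      - (Complex.I * (α : ℂ) / 2) *
          (v (((n : ℝ) - 1) * h) (((k : ℝ) + 1) * h) + v ((n : ℝ) * h) ((k : ℝ) * h)) *
          ((‖(u ((n : ℝ) * h) ((k : ℝ) * h))‖ ^ 2 : ℝ) : ℂ)
      - (Complex.I * (β : ℂ) / 2) *
          (u (((n : ℝ) + 1) * h) (((k : ℝ) + 1) * h) + u ((n : ℝ) * h) ((k : ℝ) * h)) *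
          Gc (u ((n : ℝ) * h) ((k : ℝ) * h)) (v ((n : ℝ) * h) ((k : ℝ) * h))
    ‖g1‖ ≤ 6 * (m + |α| + |β|) * M1 * M0 ^ 2 * h ∧
    ‖g2‖ ≤ 6 * (m + |α| + |β|) * M1 * M0 ^ 2 * h := by
  intro g1 g2
  have hM1nn : 0 ≤ M1 := by
    have hb := hM1 0 0 ⟨le_refl 0, hT.le⟩
    linarith [norm_nonneg (ut 0 0), norm_nonneg (ux 0 0),
      norm_nonneg (vt 0 0), norm_nonneg (vx 0 0)]
  have hM0ge1 : 1 ≤ M0 := by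
    have hb := hM0 0 0 ⟨le_refl 0, hT.le⟩
    linarith [norm_nonneg (u 0 0), norm_nonneg (v 0 0)]
  have hkc : (0:ℝ) ≤ (k:ℝ) := Nat.cast_nonneg k
  have htA : (k:ℝ) * h ∈ Set.Icc (0:ℝ) T :=
    ⟨mul_nonneg hkc hh.le, by nlinarith [hkT, hh.le]⟩
  have htB : ((k:ℝ) + 1) * h ∈ Set.Icc (0:ℝ) T :=
    ⟨mul_nonneg (by linarith) hh.le, hkT⟩
  have hsub : ∀ t₀ t₁ : ℝ, t₀ ∈ Set.Icc (0:ℝ) T → t₁ ∈ Set.Icc (0:ℝ) T →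
      Set.uIcc t₀ t₁ ⊆ Set.Icc (0:ℝ) T :=
    fun t₀ t₁ h₀ h₁ => Set.ordConnected_Icc.uIcc_subset h₀ h₁
  have stepU : ∀ x₀ x₁ t₀ t₁ : ℝ, t₀ ∈ Set.Icc (0:ℝ) T → t₁ ∈ Set.Icc (0:ℝ) T →
      ‖u x₁ t₁ - u x₀ t₀‖ ≤ M1 * (|x₁ - x₀| + |t₁ - t₀|) := by
    intro x₀ x₁ t₀ t₁ h₀ h₁
    refine Stmt18Aux.incr_bound u ut ux hut hux ?_ ?_
    · intro y _
      have hb := hM1 y t₁ h₁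
      linarith [norm_nonneg (ut y t₁), norm_nonneg (vt y t₁),
        norm_nonneg (vx y t₁)]
    · intro s hs
      have hb := hM1 x₀ s (hsub t₀ t₁ h₀ h₁ hs)
      linarith [norm_nonneg (ux x₀ s), norm_nonneg (vt x₀ s),
        norm_nonneg (vx x₀ s)]
  have stepV : ∀ x₀ x₁ t₀ t₁ : ℝ, t₀ ∈ Set.Icc (0:ℝ) T → t₁ ∈ Set.Icc (0:ℝ) T →
      ‖v x₁ t₁ - v x₀ t₀‖ ≤ M1 * (|x₁ - x₀| + |t₁ - t₀|) := by
    intro x₀ x₁ t₀ t₁ h₀ h₁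
    refine Stmt18Aux.incr_bound v vt vx hvt hvx ?_ ?_
    · intro y _
      have hb := hM1 y t₁ h₁
      linarith [norm_nonneg (ut y t₁), norm_nonneg (ux y t₁),
        norm_nonneg (vt y t₁)]
    · intro s hs
      have hb := hM1 x₀ s (hsub t₀ t₁ h₀ h₁ hs)
      linarith [norm_nonneg (ut x₀ s), norm_nonneg (ux x₀ s),
        norm_nonneg (vx x₀ s)]
  have hcu : Continuous fun p : ℝ × ℝ => u p.1 p.2 :=
    Stmt18Aux.cont_of_partials u ut ux hcut hcux hut hux
  have hcv : Continuous fun p : ℝ × ℝ => v p.1 p.2 :=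
    Stmt18Aux.cont_of_partials v vt vx hcvt hcvx hvt hvx
  have hconj : Continuous fun z : ℂ => (starRingEnd ℂ) z :=
    RCLike.continuous_conj
  have hNLc : Continuous fun p : ℂ × ℂ => NLu α β p.1 p.2 := by
    simp only [NLu, Gc]
    apply Continuous.mul continuous_const
    apply Continuous.add
    · exact (continuous_const.mul continuous_fst).mul
        (Complex.continuous_ofReal.comp ((continuous_norm.comp continuous_snd).pow 2))
    · exact (continuous_const.mul (((hconj.comp continuous_fst).mul continuous_snd).add
        (continuous_fst.mul (hconj.comp continuous_snd)))).mul continuous_snd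
  have hpath1 : Continuous fun τ : ℝ => (((((n : ℝ) + τ) * h), (((k : ℝ) + τ) * h)) : ℝ × ℝ) :=
    ((continuous_const.add continuous_id).mul continuous_const).prodMk
      ((continuous_const.add continuous_id).mul continuous_const)
  have hpath2 : Continuous fun τ : ℝ => (((((n : ℝ) - τ) * h), (((k : ℝ) + τ) * h)) : ℝ × ℝ) :=
    ((continuous_const.sub continuous_id).mul continuous_const).prodMk
      ((continuous_const.add continuous_id).mul continuous_const)
  have hu1 : Continuous fun τ : ℝ => u (((n : ℝ) + τ) * h) (((k : ℝ) + τ) * h) :=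
    hcu.comp hpath1
  have hv1 : Continuous fun τ : ℝ => v (((n : ℝ) + τ) * h) (((k : ℝ) + τ) * h) :=
    hcv.comp hpath1
  have hu2 : Continuous fun τ : ℝ => u (((n : ℝ) - τ) * h) (((k : ℝ) + τ) * h) :=
    hcu.comp hpath2
  have hv2 : Continuous fun τ : ℝ => v (((n : ℝ) - τ) * h) (((k : ℝ) + τ) * h) :=
    hcv.comp hpath2
  have hF1c : Continuous fun τ : ℝ =>
      Complex.I * (m : ℂ) * v (((n : ℝ) + τ) * h) (((k : ℝ) + τ) * h)
        + NLu α β (u (((n : ℝ) + τ) * h) (((k : ℝ) + τ) * h))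
            (v (((n : ℝ) + τ) * h) (((k : ℝ) + τ) * h)) :=
    (continuous_const.mul hv1).add (hNLc.comp (hu1.prodMk hv1))
  have hF2c : Continuous fun τ : ℝ =>
      Complex.I * (m : ℂ) * u (((n : ℝ) - τ) * h) (((k : ℝ) + τ) * h)
        + NLv α β (u (((n : ℝ) - τ) * h) (((k : ℝ) + τ) * h))
            (v (((n : ℝ) - τ) * h) (((k : ℝ) + τ) * h)) := by
    simp only [Stmt18Aux.NLv_eq]
    exact (continuous_const.mul hu2).add (hNLc.comp (hv2.prodMk hu2))
  -- common abs bounds at lattice points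
  have hAbs := hM0 ((n : ℝ) * h) ((k : ℝ) * h) htA
  have hBbs := hM0 (((n : ℝ) + 1) * h) (((k : ℝ) + 1) * h) htB
  have hCbs := hM0 (((n : ℝ) - 1) * h) (((k : ℝ) + 1) * h) htB
  have hAb : ‖(u ((n : ℝ) * h) ((k : ℝ) * h))‖
      + ‖(v ((n : ℝ) * h) ((k : ℝ) * h))‖ ≤ M0 - 1 := by linarith
  have hAb' : ‖(v ((n : ℝ) * h) ((k : ℝ) * h))‖
      + ‖(u ((n : ℝ) * h) ((k : ℝ) * h))‖ ≤ M0 - 1 := by linarith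
  have hBb : ‖(u (((n : ℝ) + 1) * h) (((k : ℝ) + 1) * h))‖ ≤ M0 - 1 := by
    linarith [norm_nonneg (v (((n : ℝ) + 1) * h) (((k : ℝ) + 1) * h))]
  have hCb : ‖(v (((n : ℝ) - 1) * h) (((k : ℝ) + 1) * h))‖ ≤ M0 - 1 := by
    linarith [norm_nonneg (u (((n : ℝ) - 1) * h) (((k : ℝ) + 1) * h))]
  have hBb' : ‖(v (((n : ℝ) - 1) * h) (((k : ℝ) + 1) * h))‖ ≤ M0 - 1 := hCb
  have hCb' : ‖(u (((n : ℝ) + 1) * h) (((k : ℝ) + 1) * h))‖ ≤ M0 - 1 := hBb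
  have hDnn : 0 ≤ M1 * h := mul_nonneg hM1nn hh.le
  constructor
  · -- g1
    refine Stmt18Aux.final_bound _ _ _ _ _ hF1c ?_
    intro τ hτ
    rw [Set.uIoc_of_le (by norm_num : (0:ℝ) ≤ 1)] at hτ
    obtain ⟨hτ0, hτ1⟩ := hτ
    have hτh0 : 0 ≤ τ * h := mul_nonneg hτ0.le hh.le
    have hτh1 : τ * h ≤ h := by nlinarith [hh.le]
    have htP : ((k:ℝ) + τ) * h ∈ Set.Icc (0:ℝ) T :=
      ⟨mul_nonneg (by linarith) hh.le, by nlinarith [hkT, hh.le]⟩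
    have dUA : ‖u (((n:ℝ) + τ) * h) (((k:ℝ) + τ) * h)
        - u ((n:ℝ) * h) ((k:ℝ) * h)‖ ≤ 2 * (M1 * h) := by
      refine le_trans (stepU _ _ _ _ htA htP) ?_
      have e1 : |((n:ℝ) + τ) * h - (n:ℝ) * h| ≤ h :=
        Stmt18Aux.absle (by nlinarith) (by nlinarith)
      have e2 : |((k:ℝ) + τ) * h - (k:ℝ) * h| ≤ h :=
        Stmt18Aux.absle (by nlinarith) (by nlinarith)
      have e3 := mul_le_mul_of_nonneg_left (add_le_add e1 e2) hM1nn
      linarith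
    have dUB : ‖u (((n:ℝ) + τ) * h) (((k:ℝ) + τ) * h)
        - u (((n:ℝ) + 1) * h) (((k:ℝ) + 1) * h)‖ ≤ 2 * (M1 * h) := by
      refine le_trans (stepU _ _ _ _ htB htP) ?_
      have e1 : |((n:ℝ) + τ) * h - ((n:ℝ) + 1) * h| ≤ h :=
        Stmt18Aux.absle (by nlinarith) (by nlinarith)
      have e2 : |((k:ℝ) + τ) * h - ((k:ℝ) + 1) * h| ≤ h :=
        Stmt18Aux.absle (by nlinarith) (by nlinarith)
      have e3 := mul_le_mul_of_nonneg_left (add_le_add e1 e2) hM1nn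
      linarith
    have dVA : ‖v (((n:ℝ) + τ) * h) (((k:ℝ) + τ) * h)
        - v ((n:ℝ) * h) ((k:ℝ) * h)‖ ≤ 2 * (M1 * h) := by
      refine le_trans (stepV _ _ _ _ htA htP) ?_
      have e1 : |((n:ℝ) + τ) * h - (n:ℝ) * h| ≤ h :=
        Stmt18Aux.absle (by nlinarith) (by nlinarith)
      have e2 : |((k:ℝ) + τ) * h - (k:ℝ) * h| ≤ h :=
        Stmt18Aux.absle (by nlinarith) (by nlinarith)
      have e3 := mul_le_mul_of_nonneg_left (add_le_add e1 e2) hM1nn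
      linarith
    have dVC : ‖v (((n:ℝ) + τ) * h) (((k:ℝ) + τ) * h)
        - v (((n:ℝ) - 1) * h) (((k:ℝ) + 1) * h)‖ ≤ 2 * (M1 * h) := by
      refine le_trans (stepV _ _ _ _ htB htP) ?_
      have e1 : |((n:ℝ) + τ) * h - ((n:ℝ) - 1) * h| ≤ h + τ * h :=
        Stmt18Aux.absle (by nlinarith) (by nlinarith)
      have e2 : |((k:ℝ) + τ) * h - ((k:ℝ) + 1) * h| ≤ h - τ * h :=
        Stmt18Aux.absle (by nlinarith) (by nlinarith)
      have e3 := mul_le_mul_of_nonneg_left (add_le_add e1 e2) hM1nn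
      linarith
    have hPb := hM0 (((n:ℝ) + τ) * h) (((k:ℝ) + τ) * h) htP
    have hcore := Stmt18Aux.core m α β M0 (M1 * h) hm hDnn hM0ge1
      (u (((n:ℝ) + τ) * h) (((k:ℝ) + τ) * h)) (v (((n:ℝ) + τ) * h) (((k:ℝ) + τ) * h))
      (u ((n:ℝ) * h) ((k:ℝ) * h)) (v ((n:ℝ) * h) ((k:ℝ) * h))
      (u (((n:ℝ) + 1) * h) (((k:ℝ) + 1) * h)) (v (((n:ℝ) - 1) * h) (((k:ℝ) + 1) * h))
      (by linarith) hAb hBb hCb dUA dUB dVA dVC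
    exact le_trans hcore (le_of_eq (by ring))
  · -- g2
    refine Stmt18Aux.final_bound _ _ _ _ _ hF2c ?_
    intro τ hτ
    rw [Set.uIoc_of_le (by norm_num : (0:ℝ) ≤ 1)] at hτ
    obtain ⟨hτ0, hτ1⟩ := hτ
    have hτh0 : 0 ≤ τ * h := mul_nonneg hτ0.le hh.le
    have hτh1 : τ * h ≤ h := by nlinarith [hh.le]
    have htP : ((k:ℝ) + τ) * h ∈ Set.Icc (0:ℝ) T :=
      ⟨mul_nonneg (by linarith) hh.le, by nlinarith [hkT, hh.le]⟩
    have dVA2 : ‖v (((n:ℝ) - τ) * h) (((k:ℝ) + τ) * h)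
        - v ((n:ℝ) * h) ((k:ℝ) * h)‖ ≤ 2 * (M1 * h) := by
      refine le_trans (stepV _ _ _ _ htA htP) ?_
      have e1 : |((n:ℝ) - τ) * h - (n:ℝ) * h| ≤ h :=
        Stmt18Aux.absle (by nlinarith) (by nlinarith)
      have e2 : |((k:ℝ) + τ) * h - (k:ℝ) * h| ≤ h :=
        Stmt18Aux.absle (by nlinarith) (by nlinarith)
      have e3 := mul_le_mul_of_nonneg_left (add_le_add e1 e2) hM1nn
      linarith
    have dVC2 : ‖v (((n:ℝ) - τ) * h) (((k:ℝ) + τ) * h)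
        - v (((n:ℝ) - 1) * h) (((k:ℝ) + 1) * h)‖ ≤ 2 * (M1 * h) := by
      refine le_trans (stepV _ _ _ _ htB htP) ?_
      have e1 : |((n:ℝ) - τ) * h - ((n:ℝ) - 1) * h| ≤ h :=
        Stmt18Aux.absle (by nlinarith) (by nlinarith)
      have e2 : |((k:ℝ) + τ) * h - ((k:ℝ) + 1) * h| ≤ h :=
        Stmt18Aux.absle (by nlinarith) (by nlinarith)
      have e3 := mul_le_mul_of_nonneg_left (add_le_add e1 e2) hM1nn
      linarith
    have dUA2 : ‖u (((n:ℝ) - τ) * h) (((k:ℝ) + τ) * h)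
        - u ((n:ℝ) * h) ((k:ℝ) * h)‖ ≤ 2 * (M1 * h) := by
      refine le_trans (stepU _ _ _ _ htA htP) ?_
      have e1 : |((n:ℝ) - τ) * h - (n:ℝ) * h| ≤ h :=
        Stmt18Aux.absle (by nlinarith) (by nlinarith)
      have e2 : |((k:ℝ) + τ) * h - (k:ℝ) * h| ≤ h :=
        Stmt18Aux.absle (by nlinarith) (by nlinarith)
      have e3 := mul_le_mul_of_nonneg_left (add_le_add e1 e2) hM1nn
      linarith
    have dUB2 : ‖u (((n:ℝ) - τ) * h) (((k:ℝ) + τ) * h)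
        - u (((n:ℝ) + 1) * h) (((k:ℝ) + 1) * h)‖ ≤ 2 * (M1 * h) := by
      refine le_trans (stepU _ _ _ _ htB htP) ?_
      have e1 : |((n:ℝ) - τ) * h - ((n:ℝ) + 1) * h| ≤ h + τ * h :=
        Stmt18Aux.absle (by nlinarith) (by nlinarith)
      have e2 : |((k:ℝ) + τ) * h - ((k:ℝ) + 1) * h| ≤ h - τ * h :=
        Stmt18Aux.absle (by nlinarith) (by nlinarith)
      have e3 := mul_le_mul_of_nonneg_left (add_le_add e1 e2) hM1nn
      linarith
    have hPb := hM0 (((n:ℝ) - τ) * h) (((k:ℝ) + τ) * h) htP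
    have hcore := Stmt18Aux.core m α β M0 (M1 * h) hm hDnn hM0ge1
      (v (((n:ℝ) - τ) * h) (((k:ℝ) + τ) * h)) (u (((n:ℝ) - τ) * h) (((k:ℝ) + τ) * h))
      (v ((n:ℝ) * h) ((k:ℝ) * h)) (u ((n:ℝ) * h) ((k:ℝ) * h))
      (v (((n:ℝ) - 1) * h) (((k:ℝ) + 1) * h)) (u (((n:ℝ) + 1) * h) (((k:ℝ) + 1) * h))
      (by linarith) hAb' hBb' hCb' dVA2 dVC2 dUA2 dUB2
    rw [Stmt18Aux.NLv_eq,
      Stmt18Aux.Gc_comm (u ((n:ℝ) * h) ((k:ℝ) * h)) (v ((n:ℝ) * h) ((k:ℝ) * h))]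
    exact le_trans hcore (le_of_eq (by ring))


end
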